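/- arXiv:2502.05126 — 3 statements merged into one kernel-verified Lean document; each statement's English description precedes it below -/
import Mathlib

section
/- Let n, d be positive integers with n ≥ 2, and let P_n be the path on n vertices. Then the induced matching number of the d-th power of P_n equals ⌊(n+d)/(d+2)⌋, i.e. im(P_n^d) = ⌊(n+d)/(d+2)⌋. -/
open MvPolynomial

/-- The `d`-th power of a simple graph `G`: vertices `u ≠ v` are adjacent iff
their distance in `G` is at most `d`. -/
def SimpleGraph.power {V : Type*} (G : SimpleGraph V) (d : ℕ) : SimpleGraph V where
  Adj u v := u ≠ v ∧ G.edist u v ≤ d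
  symm := by
    constructor
    rintro u v ⟨h1, h2⟩
    exact ⟨h1.symm, by rwa [SimpleGraph.edist_comm]⟩
  loopless := by constructor; rintro v ⟨h, -⟩; exact h rfl

/-- The edge ideal of the induced subgraph of `G` on a set `S` of vertices,
viewed inside `k[x_1,…,x_n]`. -/
noncomputable def inducedEdgeIdeal (k : Type) [Field k] {n : ℕ} (G : SimpleGraph (Fin n))
    (S : Set (Fin n)) : Ideal (MvPolynomial (Fin n) k) :=
  Ideal.span {m | ∃ a b, G.Adj a b ∧ a ∈ S ∧ b ∈ S ∧ m = X a * X b}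

/-- The edge ideal `I(G) = (x_i x_j : {i,j} ∈ E(G))` of a graph on vertex set
`{1,…,n}` (indexed by `Fin n`). -/
noncomputable def edgeIdeal (k : Type) [Field k] {n : ℕ} (G : SimpleGraph (Fin n)) :
    Ideal (MvPolynomial (Fin n) k) :=
  inducedEdgeIdeal k G Set.univ

/-- A finite graded free resolution of the submodule `P` of the `R`-module `M`,
where `R = k[x_1,…,x_n]` and `homog j ⊆ M` is the set of homogeneous elements of
degree `j` of `M`.  It consists of finite free modules `F i = (B i →₀ R)` whose
basis elements have internal degrees `deg i`, differentials `d i`, and an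
augmentation `aug : F 0 → M` with image `P`, such that the resulting complex is
exact and all maps are graded of degree `0`. -/
structure GradedFreeResolution (n : ℕ) (k : Type) [Field k]
    (M : Type) [AddCommGroup M] [Module (MvPolynomial (Fin n) k) M]
    (P : Submodule (MvPolynomial (Fin n) k) M) (homog : ℕ → Set M) where
  B : ℕ → Type
  finB : ∀ i, Finite (B i)
  deg : (i : ℕ) → B i → ℕ
  d : (i : ℕ) → (B (i + 1) →₀ MvPolynomial (Fin n) k) →ₗ[MvPolynomial (Fin n) k]
      (B i →₀ MvPolynomial (Fin n) k)
  aug : (B 0 →₀ MvPolynomial (Fin n) k) →ₗ[MvPolynomial (Fin n) k] M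
  range_aug : LinearMap.range aug = P
  exact_aug : Function.Exact (d 0) aug
  exact : ∀ i, Function.Exact (d (i + 1)) (d i)
  aug_graded : ∀ s : B 0, aug (Finsupp.single s 1) ∈ homog (deg 0 s)
  d_graded : ∀ (i : ℕ) (s : B (i + 1)) (b : B i),
    (d i (Finsupp.single s 1)) b = 0 ∨
      (deg i b ≤ deg (i + 1) s ∧
        (d i (Finsupp.single s 1)) b ∈
          homogeneousSubmodule (Fin n) k (deg (i + 1) s - deg i b))

/-- The Castelnuovo–Mumford regularity of the graded module `P ⊆ M` (with
homogeneity structure `homog`): the least `r` such that some graded free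
resolution has all of its `i`-th syzygy degrees at most `r + i`; this is
`max {j - i : β_{i,j} ≠ 0}`, which for finitely generated graded modules over
`k[x_1,…,x_n]` agrees with `max {i + j : H^i_m(M)_j ≠ 0}`. -/
noncomputable def gradedReg (n : ℕ) (k : Type) [Field k]
    (M : Type) [AddCommGroup M] [Module (MvPolynomial (Fin n) k) M]
    (P : Submodule (MvPolynomial (Fin n) k) M) (homog : ℕ → Set M) : ℤ :=
  sInf {r : ℤ | ∃ F : GradedFreeResolution n k M P homog,
    ∀ (i : ℕ) (b : F.B i), (F.deg i b : ℤ) - i ≤ r}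

/-- The Castelnuovo–Mumford regularity `reg (R/I)` of the quotient of
`R = k[x_1,…,x_n]` by a homogeneous ideal `I`. -/
noncomputable def regQuot (n : ℕ) (k : Type) [Field k]
    (I : Ideal (MvPolynomial (Fin n) k)) : ℤ :=
  gradedReg n k (MvPolynomial (Fin n) k ⧸ I) ⊤
    (fun j => (Ideal.Quotient.mk I) '' (homogeneousSubmodule (Fin n) k j))

/-- The Castelnuovo–Mumford regularity `reg I` of a homogeneous ideal
`I ⊆ R = k[x_1,…,x_n]`, viewed as a graded `R`-module. -/
noncomputable def regIdeal (n : ℕ) (k : Type) [Field k]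
    (I : Ideal (MvPolynomial (Fin n) k)) : ℤ :=
  gradedReg n k (MvPolynomial (Fin n) k) I
    (fun j => (homogeneousSubmodule (Fin n) k j : Set (MvPolynomial (Fin n) k)))

/-- The induced matching number of a simple graph: the largest number of edges
in a matching of `G` which is an induced subgraph of `G`. -/
noncomputable def indMatchNum {V : Type*} (G : SimpleGraph V) : ℕ :=
  sSup {m | ∃ M : G.Subgraph, M.IsMatching ∧ M.IsInduced ∧ M.edgeSet.ncard = m}

/-- The closed neighborhood `N_G[S]` of a set of vertices. -/
def closedNbhdSet {V : Type*} (G : SimpleGraph V) (S : Set V) : Set V :=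
  S ∪ {w | ∃ v ∈ S, G.Adj v w}

/-- The ideal generated by the variables `x_ℓ` with `ℓ` a neighbor of `v` not in `S`. -/
noncomputable def nbrIdeal (k : Type) [Field k] {n : ℕ} (G : SimpleGraph (Fin n))
    (v : Fin n) (S : Set (Fin n)) : Ideal (MvPolynomial (Fin n) k) :=
  Ideal.span (X '' ((G.neighborSet v) \ S))

/-- The edge ideal of the induced subgraph of `G` on the complement of the
closed neighborhood of the vertex set `S`, i.e. `I(G \ N_G[S])`. -/
noncomputable def outsideNbhdEdgeIdeal (k : Type) [Field k] {n : ℕ} (G : SimpleGraph (Fin n))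
    (S : Set (Fin n)) : Ideal (MvPolynomial (Fin n) k) :=
  inducedEdgeIdeal k G (closedNbhdSet G S)ᶜ

/-- The distance witness set `W(u,v)` of two vertices at distance `d ≥ 2`:
vertices `w` with `dist(u,w) = d-1` and `dist(w,v) = 1`. -/
def distWitness {V : Type*} (G : SimpleGraph V) (d : ℕ) (u v : V) : Set V :=
  {w | G.edist u w = ((d - 1 : ℕ) : ℕ∞) ∧ G.edist w v = 1}

lemma pathGraph_exists_walk {n : ℕ} : ∀ (k : ℕ) (u v : Fin n), v.val = u.val + k →
    ∃ p : (SimpleGraph.pathGraph n).Walk u v, p.length = k := by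
  intro k
  induction k with
  | zero =>
    intro u v h
    have : u = v := Fin.ext (by omega)
    subst this
    exact ⟨SimpleGraph.Walk.nil, rfl⟩
  | succ k ih =>
    intro u v h
    have hu1 : u.val + 1 < n := by have := v.isLt; omega
    set u' : Fin n := ⟨u.val + 1, hu1⟩ with hu'
    have hadj : (SimpleGraph.pathGraph n).Adj u u' := by
      rw [SimpleGraph.pathGraph_adj]; left; rfl
    obtain ⟨p, hp⟩ := ih u' v (by simp [hu']; omega)
    exact ⟨SimpleGraph.Walk.cons hadj p, by simp [hp]⟩

lemma pathGraph_dist_le_length {n : ℕ} {u v : Fin n}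
    (p : (SimpleGraph.pathGraph n).Walk u v) : Nat.dist u.val v.val ≤ p.length := by
  induction p with
  | nil => simp [Nat.dist_self]
  | @cons a b c h p ih =>
    have h1 : Nat.dist a.val b.val ≤ 1 := by
      rw [SimpleGraph.pathGraph_adj] at h
      simp [Nat.dist]; omega
    calc Nat.dist a.val c.val ≤ Nat.dist a.val b.val + Nat.dist b.val c.val :=
          Nat.dist.triangle_inequality _ _ _
      _ ≤ 1 + p.length := by omega
      _ = (SimpleGraph.Walk.cons h p).length := by simp [Nat.add_comm]

lemma pathGraph_edist {n : ℕ} (u v : Fin n) :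
    (SimpleGraph.pathGraph n).edist u v = (Nat.dist u.val v.val : ℕ∞) := by
  have hex : ∃ p : (SimpleGraph.pathGraph n).Walk u v, p.length = Nat.dist u.val v.val := by
    rcases le_total u.val v.val with h | h
    · exact pathGraph_exists_walk _ u v (by simp [Nat.dist]; omega)
    · obtain ⟨p, hp⟩ := pathGraph_exists_walk (u.val - v.val) v u (by omega)
      exact ⟨p.reverse, by simp [hp, Nat.dist]; omega⟩
  obtain ⟨p, hp⟩ := hex
  apply le_antisymm
  · calc (SimpleGraph.pathGraph n).edist u v ≤ p.length := SimpleGraph.edist_le p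
      _ = _ := by rw [hp]
  · have hne : (SimpleGraph.pathGraph n).edist u v ≠ ⊤ := by
      apply ne_top_of_le_ne_top _ (SimpleGraph.edist_le p)
      simp
    obtain ⟨q, hq⟩ := SimpleGraph.exists_walk_of_edist_ne_top hne
    rw [← hq]
    exact_mod_cast Nat.cast_le.mpr (pathGraph_dist_le_length q)

lemma power_path_adj {n d : ℕ} (u v : Fin n) :
    ((SimpleGraph.pathGraph n).power d).Adj u v ↔ u ≠ v ∧ Nat.dist u.val v.val ≤ d := by
  show (u ≠ v ∧ _) ↔ _
  rw [pathGraph_edist, Nat.cast_le]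

-- separation lemma
lemma sep_lemma {n d : ℕ} {M : ((SimpleGraph.pathGraph n).power d).Subgraph}
    (hm : M.IsMatching) (hi : M.IsInduced) {a b a' b' : Fin n}
    (hab : M.Adj a b) (hab' : M.Adj a' b')
    (h1 : a.val < b.val) (h2 : a'.val < b'.val) (h3 : a.val < a'.val) :
    a.val + d + 2 ≤ a'.val := by
  have hGab : _ := hab.adj_sub
  rw [power_path_adj] at hGab
  have hdab : b.val - a.val ≤ d := by have := hGab.2; simp [Nat.dist] at this; omega
  have hav : a ∈ M.verts := hab.fst_mem
  have hbv : b ∈ M.verts := hab.snd_mem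
  have ha'v : a' ∈ M.verts := hab'.fst_mem
  -- b ≠ a'
  have hba' : b ≠ a' := by
    rintro rfl
    obtain ⟨w, -, huniq⟩ := hm hbv
    have e1 : a = b' := (huniq a hab.symm).trans (huniq b' hab').symm
    have := congrArg Fin.val e1
    omega
  -- a' cannot be < b
  have hblt : b.val < a'.val := by
    rcases lt_or_ge a'.val b.val with hlt | hle
    · exfalso
      have haa' : ((SimpleGraph.pathGraph n).power d).Adj a a' := by
        rw [power_path_adj]
        refine ⟨by intro h; rw [h] at h3; omega, ?_⟩
        simp [Nat.dist]; omega
      have hMaa' : M.Adj a a' := hi hav ha'v haa'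
      obtain ⟨w, -, huniq⟩ := hm hav
      have : b = a' := (huniq b hab).trans (huniq a' hMaa').symm
      have := congrArg Fin.val this
      omega
    · exact lt_of_le_of_ne hle (fun h => hba' (Fin.ext h))
  -- b and a' not adjacent in G
  have hnadj : ¬ ((SimpleGraph.pathGraph n).power d).Adj b a' := by
    intro h
    have hMba' : M.Adj b a' := hi hbv ha'v h
    obtain ⟨w, -, huniq⟩ := hm hbv
    have : a = a' := (huniq a hab.symm).trans (huniq a' hMba').symm
    have := congrArg Fin.val this
    omega
  rw [power_path_adj] at hnadj
  push_neg at hnadj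
  have := hnadj hba'
  simp [Nat.dist] at this
  omega

lemma upper_bound {n d : ℕ} (hd : 1 ≤ d) (M : ((SimpleGraph.pathGraph n).power d).Subgraph)
    (hm : M.IsMatching) (hi : M.IsInduced) :
    M.edgeSet.ncard ≤ (n + d) / (d + 2) := by
  classical
  set m := (n + d) / (d + 2) with hmdef
  -- the min-endpoint block function
  set f : Sym2 (Fin n) → ℕ := Sym2.lift ⟨fun a b => (a.val ⊓ b.val) / (d + 2),
    fun a b => by dsimp only; rw [inf_comm]⟩ with hf
  have hfeq : ∀ a b : Fin n, f s(a, b) = (a.val ⊓ b.val) / (d + 2) := fun a b => rfl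
  have key : ∀ e ∈ M.edgeSet, ∃ a b : Fin n, a.val < b.val ∧ M.Adj a b ∧ e = s(a, b) := by
    intro e he
    induction e with
    | h x y =>
      rw [SimpleGraph.Subgraph.mem_edgeSet] at he
      have hne : x ≠ y := he.ne
      rcases lt_or_gt_of_ne (fun h : x.val = y.val => hne (Fin.ext h)) with h | h
      · exact ⟨x, y, h, he, rfl⟩
      · exact ⟨y, x, h, he.symm, Sym2.eq_swap⟩
  have hmaps : ∀ e ∈ M.edgeSet, f e < m := by
    intro e he
    obtain ⟨a, b, hlt, hadj, rfl⟩ := key e he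
    rw [hfeq, inf_eq_left.mpr hlt.le]
    have hb : b.val < n := b.isLt
    have ha : a.val ≤ n - 2 := by omega
    have h1 : a.val / (d + 2) ≤ (n - 2) / (d + 2) := Nat.div_le_div_right ha
    have h2 : (n - 2 + (d + 2)) / (d + 2) = (n - 2) / (d + 2) + 1 := Nat.add_div_right _ (by omega)
    have h3 : n - 2 + (d + 2) = n + d := by omega
    rw [h3] at h2
    omega
  have hinj : Set.InjOn f M.edgeSet := by
    intro e he e' he' hfe
    obtain ⟨a, b, hlt, hadj, rfl⟩ := key e he
    obtain ⟨a', b', hlt', hadj', rfl⟩ := key e' he'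
    rw [hfeq, hfeq, inf_eq_left.mpr hlt.le, inf_eq_left.mpr hlt'.le] at hfe
    rcases Nat.lt_trichotomy a.val a'.val with h | h | h
    · exfalso
      have := sep_lemma hm hi hadj hadj' hlt hlt' h
      have h4 : (a.val + (d + 2)) / (d+2) ≤ a'.val / (d+2) := Nat.div_le_div_right (by omega)
      rw [Nat.add_div_right _ (by omega)] at h4
      omega
    · have : a = a' := Fin.ext h
      subst this
      obtain ⟨w, -, huniq⟩ := hm hadj.fst_mem
      have : b = b' := (huniq b hadj).trans (huniq b' hadj').symm
      rw [this]
    · exfalso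
      have := sep_lemma hm hi hadj' hadj hlt' hlt h
      have h4 : (a'.val + (d + 2)) / (d+2) ≤ a.val / (d+2) := Nat.div_le_div_right (by omega)
      rw [Nat.add_div_right _ (by omega)] at h4
      omega
  calc M.edgeSet.ncard = (f '' M.edgeSet).ncard := (Set.ncard_image_of_injOn hinj).symm
    _ ≤ (Set.Iio m).ncard := Set.ncard_le_ncard (fun x ⟨e, he, hfe⟩ => hfe ▸ hmaps e he)
        (Set.finite_Iio m)
    _ = m := by
        rw [show Set.Iio m = ↑(Finset.range m) by ext x; simp, Set.ncard_coe_finset,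
          Finset.card_range]


lemma lower_bound {n d : ℕ} (hn : 2 ≤ n) (hd : 1 ≤ d) :
    ∃ M : ((SimpleGraph.pathGraph n).power d).Subgraph,
      M.IsMatching ∧ M.IsInduced ∧ M.edgeSet.ncard = (n + d) / (d + 2) := by
  classical
  set m := (n + d) / (d + 2) with hmdef
  have hlt : ∀ i : ℕ, i < m → i * (d + 2) + 1 < n := by
    intro i hi
    have h1 : (i + 1) * (d + 2) ≤ m * (d + 2) := Nat.mul_le_mul_right _ hi
    have h2 : m * (d + 2) ≤ n + d := Nat.div_mul_le_self _ _
    have h3 : (i + 1) * (d + 2) = i * (d + 2) + (d + 2) := by ring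
    omega
  have hmul : ∀ i j : ℕ, i * (d + 2) = j * (d + 2) → i = j := fun i j h =>
    Nat.eq_of_mul_eq_mul_right (by omega) h
  have hblock : ∀ i j : ℕ, i * (d + 2) + 1 = j * (d + 2) → False := by
    intro i j h
    rcases le_or_gt j i with hji | hij
    · have := Nat.mul_le_mul_right (d + 2) hji
      omega
    · have h1 : (i + 1) * (d + 2) ≤ j * (d + 2) := Nat.mul_le_mul_right _ hij
      have h3 : (i + 1) * (d + 2) = i * (d + 2) + (d + 2) := by ring
      omega
  have hsepa : ∀ i j x y : ℕ, i < j → (x = i * (d + 2) ∨ x = i * (d + 2) + 1) →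
      (y = j * (d + 2) ∨ y = j * (d + 2) + 1) → ¬ (Nat.dist x y ≤ d) := by
    intro i j x y hij hx hy
    have h1 : (i + 1) * (d + 2) ≤ j * (d + 2) := Nat.mul_le_mul_right _ hij
    have h3 : (i + 1) * (d + 2) = i * (d + 2) + (d + 2) := by ring
    simp [Nat.dist]
    omega
  refine ⟨⟨{v | ∃ i, i < m ∧ (v.val = i * (d + 2) ∨ v.val = i * (d + 2) + 1)},
    fun u v => ∃ i, i < m ∧ ((u.val = i * (d + 2) ∧ v.val = i * (d + 2) + 1) ∨
      (v.val = i * (d + 2) ∧ u.val = i * (d + 2) + 1)), ?_, ?_, ?_⟩, ?_, ?_, ?_⟩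
  · -- adj_sub
    rintro u v ⟨i, hi, hc⟩
    rw [power_path_adj]
    constructor
    · intro h
      rw [h] at hc
      omega
    · simp [Nat.dist]; omega
  · -- edge_vert
    rintro u v ⟨i, hi, hc⟩
    exact ⟨i, hi, by omega⟩
  · -- symm
    constructor
    rintro u v ⟨i, hi, hc⟩
    exact ⟨i, hi, by tauto⟩
  · -- IsMatching
    rintro v ⟨i, hi, hv⟩
    rcases hv with hv | hv
    · refine ⟨⟨i * (d + 2) + 1, hlt i hi⟩, ⟨i, hi, Or.inl ⟨hv, rfl⟩⟩, ?_⟩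
      rintro y ⟨j, hj, hc | hc⟩
      · have : i = j := hmul _ _ (hv ▸ hc.1.symm ▸ rfl)
        subst this
        exact Fin.ext (by simpa using hc.2)
      · exact (hblock j i (by omega)).elim
    · refine ⟨⟨i * (d + 2), by have := hlt i hi; omega⟩, ⟨i, hi, Or.inr ⟨rfl, hv⟩⟩, ?_⟩
      rintro y ⟨j, hj, hc | hc⟩
      · exact (hblock i j (by omega)).elim
      · have : i = j := hmul _ _ (by omega)
        subst this
        exact Fin.ext (by simpa using hc.1)
  · -- IsInduced
    rintro u ⟨i, hi, hu⟩ v ⟨j, hj, hv⟩ hadj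
    rw [power_path_adj] at hadj
    obtain ⟨hne, hdist⟩ := hadj
    rcases Nat.lt_trichotomy i j with h | h | h
    · exact absurd hdist (hsepa i j u.val v.val h hu hv)
    · subst h
      rcases hu with hu | hu <;> rcases hv with hv | hv
      · exact absurd (Fin.ext (hu.trans hv.symm) : u = v) hne
      · exact ⟨i, hi, Or.inl ⟨hu, hv⟩⟩
      · exact ⟨i, hi, Or.inr ⟨hv, hu⟩⟩
      · exact absurd (Fin.ext (hu.trans hv.symm) : u = v) hne
    · exact absurd (Nat.dist_comm u.val v.val ▸ hdist) (hsepa j i v.val u.val h hv hu)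
  · -- ncard
    set F : Fin m → Sym2 (Fin n) := fun i =>
      s((⟨i.val * (d + 2), by have := hlt i.val i.isLt; omega⟩ : Fin n),
        (⟨i.val * (d + 2) + 1, hlt i.val i.isLt⟩ : Fin n)) with hF
    have key : ∀ (M : ((SimpleGraph.pathGraph n).power d).Subgraph),
        (∀ u v : Fin n, M.Adj u v ↔ ∃ i, i < m ∧
          ((u.val = i * (d + 2) ∧ v.val = i * (d + 2) + 1) ∨
            (v.val = i * (d + 2) ∧ u.val = i * (d + 2) + 1))) →
        M.edgeSet.ncard = m := ?_
    · exact key _ fun u v => Iff.rfl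
    intro M hAdj
    have hrange : M.edgeSet = Set.range F := by
      apply Set.Subset.antisymm
      · intro e he
        induction e with
        | h x y =>
          rw [SimpleGraph.Subgraph.mem_edgeSet, hAdj] at he
          obtain ⟨i, hi, hc | hc⟩ := he
          · refine ⟨⟨i, hi⟩, ?_⟩
            simp only [hF]
            rw [Sym2.eq_iff]
            exact Or.inl ⟨Fin.ext hc.1.symm, Fin.ext hc.2.symm⟩
          · refine ⟨⟨i, hi⟩, ?_⟩
            simp only [hF]
            rw [Sym2.eq_iff]
            exact Or.inr ⟨Fin.ext hc.1.symm, Fin.ext hc.2.symm⟩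
      · rintro e ⟨i, rfl⟩
        rw [hF, SimpleGraph.Subgraph.mem_edgeSet, hAdj]
        exact ⟨i.val, i.isLt, Or.inl ⟨rfl, rfl⟩⟩
    have hFinj : Function.Injective F := by
      intro i j hij
      simp only [hF, Sym2.eq_iff] at hij
      rcases hij with ⟨h1, -⟩ | ⟨h1, h2⟩
      · exact Fin.ext (hmul _ _ (congrArg Fin.val h1))
      · exact absurd (congrArg Fin.val h2) (by intro h; exact hblock _ _ (by simpa using h))
    rw [hrange, ← Set.image_univ, Set.ncard_image_of_injective _ hFinj, Set.ncard_univ,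
      Nat.card_eq_fintype_card, Fintype.card_fin]


/-- `im(P_n^d) = ⌊(n+d)/(d+2)⌋`. -/
theorem indMatchNum_power_path (n d : ℕ) (hn : 2 ≤ n) (hd : 1 ≤ d) :
    indMatchNum ((SimpleGraph.pathGraph n).power d) = (n + d) / (d + 2) := by
  obtain ⟨M0, hm0, hi0, hc0⟩ := lower_bound hn hd
  have hub : ∀ x ∈ {m | ∃ M : ((SimpleGraph.pathGraph n).power d).Subgraph,
      M.IsMatching ∧ M.IsInduced ∧ M.edgeSet.ncard = m}, x ≤ (n + d) / (d + 2) := by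
    rintro x ⟨M, hm, hi, rfl⟩
    exact upper_bound hd M hm hi
  unfold indMatchNum
  apply le_antisymm
  · exact csSup_le ⟨_, ⟨M0, hm0, hi0, hc0⟩⟩ hub
  · exact le_csSup ⟨_, hub⟩ ⟨M0, hm0, hi0, hc0⟩
end

section
/- Let G be a simple graph, d ≥ 2, and suppose {u_1,v_1} and {u_2,v_2} form an induced matching of size 2 in G^d with dist_G(u_1,v_1) = d and dist_G(u_2,v_2) = d. Then W[u_1,v_1] ∩ W[u_2,v_2] = ∅, where for vertices u,v at distance d, W[u,v] = W(u,v) ∪ {u,v} and W(u,v) is the set of vertices w with dist_G(u,w) = d-1 and dist_G(w,v) = 1. -/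
open MvPolynomial

/-- if `{u₁,v₁}`, `{u₂,v₂}` is an induced matching of `G^d` with
`dist_G(u₁,v₁) = dist_G(u₂,v₂) = d`, then `W[u₁,v₁] ∩ W[u₂,v₂] = ∅`. -/
theorem distWitness_disjoint_of_dist_eq {V : Type*} (G : SimpleGraph V) (d : ℕ) (hd : 2 ≤ d)
    (u₁ v₁ u₂ v₂ : V)
    (h₁ : (G.power d).Adj u₁ v₁) (h₂ : (G.power d).Adj u₂ v₂)
    (huu : u₁ ≠ u₂) (huv : u₁ ≠ v₂) (hvu : v₁ ≠ u₂) (hvv : v₁ ≠ v₂)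
    (nuu : ¬ (G.power d).Adj u₁ u₂) (nuv : ¬ (G.power d).Adj u₁ v₂)
    (nvu : ¬ (G.power d).Adj v₁ u₂) (nvv : ¬ (G.power d).Adj v₁ v₂)
    (hd₁ : G.edist u₁ v₁ = (d : ℕ∞))
    (hd₂ : G.edist u₂ v₂ = (d : ℕ∞)) :
    (distWitness G d u₁ v₁ ∪ {u₁, v₁}) ∩ (distWitness G d u₂ v₂ ∪ {u₂, v₂}) = ∅ := by
  have key : ∀ a b : V, a ≠ b → ¬ (G.power d).Adj a b → ¬ (G.edist a b ≤ (d : ℕ∞)) :=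
    fun a b hab hadj hle => hadj ⟨hab, hle⟩
  have hd1 : ((d - 1 : ℕ) : ℕ∞) ≤ (d : ℕ∞) := by exact_mod_cast Nat.sub_le d 1
  have h2d : (2 : ℕ∞) ≤ (d : ℕ∞) := by exact_mod_cast hd
  have h1d : (1 : ℕ∞) ≤ (d : ℕ∞) := le_trans (by norm_num) h2d
  ext x
  simp only [Set.mem_inter_iff, Set.mem_union, Set.mem_insert_iff, Set.mem_singleton_iff,
    Set.mem_empty_iff_false, iff_false, distWitness, Set.mem_setOf_eq, not_and]
  rintro (h1 | h1 | h1) (h2 | h2 | h2)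
  · refine key v₁ v₂ hvv nvv (le_trans (le_trans (G.edist_triangle (v := x)) ?_) h2d)
    rw [G.edist_comm, h1.2, h2.2]; norm_num
  · exact key v₁ u₂ hvu nvu (le_trans (le_of_eq
      (by rw [G.edist_comm, ← h2]; exact h1.2)) h1d)
  · exact key v₁ v₂ hvv nvv (le_trans (le_of_eq
      (by rw [G.edist_comm, ← h2]; exact h1.2)) h1d)
  · exact key u₁ u₂ huu nuu (le_trans (le_of_eq
      (by rw [G.edist_comm, ← h1]; exact h2.1)) hd1)
  · exact huu (h1.symm.trans h2)
  · exact huv (h1.symm.trans h2)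
  · exact key v₁ u₂ hvu nvu (le_trans (le_of_eq
      (by rw [G.edist_comm, ← h1]; exact h2.1)) hd1)
  · exact hvu (h1.symm.trans h2)
  · exact hvv (h1.symm.trans h2)
end

section
/- Let n ≥ 2d+2 and G = C_n^d, with I = I(G), J = I(G \ {1}), and K = (x_{n-d+1},...,x_n, x_2,...,x_{d+1}). Then I = J + x_1·K and J ∩ K = L + x_2·M, where L = Σ_{j=3}^{d+1} x_j(A_j + B_j) + Σ_{j=n-d+1}^{n} x_j(A_j + B_j) and M = A_2 + B_2. -/
open MvPolynomial

section Helpers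

variable {R : Type*} [CommSemiring R]

lemma mem_add_left' {I J : Ideal R} {x : R} (h : x ∈ I) : x ∈ I + J := by
  rw [Ideal.add_eq_sup]; exact Submodule.mem_sup_left h

lemma mem_add_right' {I J : Ideal R} {x : R} (h : x ∈ J) : x ∈ I + J := by
  rw [Ideal.add_eq_sup]; exact Submodule.mem_sup_right h

lemma ideal_sum_le' {ι : Type*} {s : Finset ι} {f : ι → Ideal R} {K : Ideal R}
    (h : ∀ j ∈ s, f j ≤ K) : (∑ j ∈ s, f j) ≤ K := by
  classical
  induction s using Finset.induction_on with
  | empty => simp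
  | insert x s hx ih =>
    rw [Finset.sum_insert hx, Ideal.add_eq_sup]
    exact sup_le (h _ (Finset.mem_insert_self _ _))
      (ih fun j hj => h j (Finset.mem_insert_of_mem hj))

lemma le_ideal_sum' {ι : Type*} [DecidableEq ι] {s : Finset ι} {f : ι → Ideal R} {j : ι}
    (hj : j ∈ s) : f j ≤ ∑ i ∈ s, f i := by
  rw [← Finset.add_sum_erase _ f hj, Ideal.add_eq_sup]
  exact le_sup_left

lemma span_singleton_mul_span' (x : R) (s : Set R) :
    Ideal.span {x} * Ideal.span s = Ideal.span ((x * ·) '' s) := by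
  rw [Ideal.span_mul_span', Set.singleton_mul]

end Helpers

section MonHelpers

variable {σ : Type*} {R : Type*} [CommSemiring R]

lemma X_mul_X_eq (a b : σ) :
    (X a * X b : MvPolynomial σ R)
      = monomial (Finsupp.single a 1 + Finsupp.single b 1) 1 := by
  rw [MvPolynomial.X, MvPolynomial.X, MvPolynomial.monomial_mul, one_mul]

lemma X_mul_X_mul_X_eq (j a b : σ) :
    (X j * (X a * X b) : MvPolynomial σ R)
      = monomial (Finsupp.single j 1 + (Finsupp.single a 1 + Finsupp.single b 1)) 1 := by
  rw [X_mul_X_eq, MvPolynomial.X, MvPolynomial.monomial_mul, one_mul]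

lemma pair_apply_left {a b : σ} (h : a ≠ b) :
    (Finsupp.single a 1 + Finsupp.single b 1 : σ →₀ ℕ) a = 1 := by
  classical
  simp [Finsupp.single_apply, h, Ne.symm h]

lemma pair_apply_right {a b : σ} (h : a ≠ b) :
    (Finsupp.single a 1 + Finsupp.single b 1 : σ →₀ ℕ) b = 1 := by
  classical
  simp [Finsupp.single_apply, h, Ne.symm h]

lemma pair_le {a b : σ} (h : a ≠ b) {m : σ →₀ ℕ} (ha : 1 ≤ m a) (hb : 1 ≤ m b) :
    Finsupp.single a 1 + Finsupp.single b 1 ≤ m := by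
  classical
  rw [Finsupp.le_def]
  intro i
  simp only [Finsupp.coe_add, Pi.add_apply, Finsupp.single_apply]
  by_cases hia : a = i
  · by_cases hib : b = i
    · exact absurd (hia.trans hib.symm) h
    · subst hia; simpa [hib] using ha
  · by_cases hib : b = i
    · subst hib; simpa [hia] using hb
    · simp [hia, hib]

lemma triple_le {j a b : σ} (hja : j ≠ a) (hjb : j ≠ b) (hab : a ≠ b) {m : σ →₀ ℕ}
    (hj : 1 ≤ m j) (ha : 1 ≤ m a) (hb : 1 ≤ m b) :
    Finsupp.single j 1 + (Finsupp.single a 1 + Finsupp.single b 1) ≤ m := by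
  classical
  rw [Finsupp.le_def]
  intro i
  simp only [Finsupp.coe_add, Pi.add_apply, Finsupp.single_apply]
  by_cases hij : j = i <;> by_cases hia : a = i <;> by_cases hib : b = i <;>
    first
      | (exact absurd (by grind) hja)
      | (exact absurd (by grind) hjb)
      | (exact absurd (by grind) hab)
      | simp_all
end MonHelpers

section DistanceLemmas

open SimpleGraph

lemma fin_sub_val {n : ℕ} (x y : Fin n) :
    ((y : ℕ) ≤ (x : ℕ) ∧ ((x - y : Fin n) : ℕ) = (x : ℕ) - (y : ℕ)) ∨
      ((x : ℕ) < (y : ℕ) ∧ ((x - y : Fin n) : ℕ) = n + (x : ℕ) - (y : ℕ)) := by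
  have hx := x.isLt
  have hy := y.isLt
  rcases le_or_gt (y : ℕ) (x : ℕ) with h | h
  · left
    refine ⟨h, ?_⟩
    rw [Fin.sub_def]
    show (n - (y : ℕ) + (x : ℕ)) % n = (x : ℕ) - (y : ℕ)
    have e : n - (y : ℕ) + (x : ℕ) = n + ((x : ℕ) - (y : ℕ)) := by omega
    rw [e, Nat.add_mod_left]
    exact Nat.mod_eq_of_lt (by omega)
  · right
    refine ⟨h, ?_⟩
    rw [Fin.sub_def]
    show (n - (y : ℕ) + (x : ℕ)) % n = n + (x : ℕ) - (y : ℕ)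
    rw [Nat.mod_eq_of_lt (by omega)]
    omega

lemma cyc_edist_le_aux (n : ℕ) (hn : 2 ≤ n) :
    ∀ (k : ℕ) (u v : Fin n), ((v - u : Fin n) : ℕ) = k → (cycleGraph n).edist u v ≤ (k : ℕ∞) := by
  haveI : NeZero n := ⟨by omega⟩
  have h1 : ((1 : Fin n) : ℕ) = 1 := by
    rw [Fin.val_one']; exact Nat.mod_eq_of_lt (by omega)
  intro k
  induction k with
  | zero =>
    intro u v h
    have hvu : v - u = 0 := Fin.ext (by simpa using h)
    have : v = u := sub_eq_zero.mp hvu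
    simp [this, SimpleGraph.edist_self]
  | succ k ih =>
    intro u v h
    have hadj : (cycleGraph n).Adj (v - 1) v := by
      rw [cycleGraph_adj']
      right
      have e : v - (v - 1) = 1 := sub_sub_cancel v 1
      rw [e, h1]
    have hw : ((v - 1 - u : Fin n) : ℕ) = k := by
      have e : v - 1 - u = (v - u) - 1 := sub_right_comm v 1 u
      rw [e]
      rcases fin_sub_val (v - u) (1 : Fin n) with ⟨h2, h3⟩ | ⟨h2, h3⟩ <;>
        rw [h1] at * <;> omega
    calc (cycleGraph n).edist u v
        ≤ (cycleGraph n).edist u (v - 1) + (cycleGraph n).edist (v - 1) v :=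
          SimpleGraph.edist_triangle
      _ ≤ (k : ℕ∞) + 1 := add_le_add (ih u (v - 1) hw) (le_of_eq (edist_eq_one_iff_adj.mpr hadj))
      _ = ((k + 1 : ℕ) : ℕ∞) := by push_cast; ring

lemma cyc_walk_lb (n : ℕ) (hn : 2 ≤ n) (u v : Fin n) (p : (cycleGraph n).Walk u v) :
    ((v - u : Fin n) : ℕ) ≤ p.length ∨ ((u - v : Fin n) : ℕ) ≤ p.length := by
  haveI : NeZero n := ⟨by omega⟩
  induction p with
  | nil => simp
  | @cons u w v h q ih =>
    have hadj := cycleGraph_adj'.mp h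
    have A := fin_sub_val v u
    have B := fin_sub_val u v
    have C := fin_sub_val v w
    have D := fin_sub_val w v
    have E := fin_sub_val u w
    have F := fin_sub_val w u
    have hu := u.isLt
    have hv := v.isLt
    have hwlt := w.isLt
    rw [SimpleGraph.Walk.length_cons]
    omega

lemma cyc_edist_le_iff (n : ℕ) (hn : 2 ≤ n) (u v : Fin n) (d : ℕ) :
    (cycleGraph n).edist u v ≤ (d : ℕ∞) ↔
      ((v - u : Fin n) : ℕ) ≤ d ∨ ((u - v : Fin n) : ℕ) ≤ d := by
  constructor
  · intro h
    have hne : (cycleGraph n).edist u v ≠ ⊤ := by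
      intro ht; rw [ht] at h; simp at h
    obtain ⟨p, hp⟩ := SimpleGraph.exists_walk_of_edist_ne_top hne
    have hlen : (p.length : ℕ∞) ≤ (d : ℕ∞) := by rw [hp]; exact h
    have hlen' : p.length ≤ d := by exact_mod_cast hlen
    rcases cyc_walk_lb n hn u v p with h' | h'
    · exact Or.inl (le_trans h' hlen')
    · exact Or.inr (le_trans h' hlen')
  · rintro (h | h)
    · exact le_trans (cyc_edist_le_aux n hn _ u v rfl) (by exact_mod_cast h)
    · rw [SimpleGraph.edist_comm]
      exact le_trans (cyc_edist_le_aux n hn _ v u rfl) (by exact_mod_cast h)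

lemma power_cycle_adj_v0 (n d : ℕ) (hd : 1 ≤ d) (hn : 2 * d + 2 ≤ n)
    (v₀ : Fin n) (hv₀ : (v₀ : ℕ) = 0) (x : Fin n) :
    ((cycleGraph n).power d).Adj v₀ x ↔
      (n - d ≤ (x : ℕ) ∨ (1 ≤ (x : ℕ) ∧ (x : ℕ) ≤ d)) := by
  have h2 : 2 ≤ n := by omega
  have hx := x.isLt
  have hiff : ((cycleGraph n).power d).Adj v₀ x ↔
      v₀ ≠ x ∧ (cycleGraph n).edist v₀ x ≤ (d : ℕ∞) := Iff.rfl
  rw [hiff, cyc_edist_le_iff n h2]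
  have A := fin_sub_val x v₀
  have B := fin_sub_val v₀ x
  have hne : v₀ ≠ x ↔ ¬ ((x : ℕ) = 0) := by
    constructor
    · intro h h'
      exact h (Fin.ext (by omega))
    · intro h h'
      exact h (by rw [← h', hv₀])
  rw [hne]
  omega

end DistanceLemmas

section CombCore

open SimpleGraph

/-- The set of exponent vectors generating `L + x₁ M` as a monomial ideal. -/
def SRHSset (n d : ℕ) (G : SimpleGraph (Fin n)) (v₀ v₁ : Fin n) : Set (Fin n →₀ ℕ) :=
  {s | ∃ j ℓ : Fin n, ((2 ≤ (j : ℕ) ∧ (j : ℕ) ≤ d) ∨ n - d ≤ (j : ℕ)) ∧ G.Adj j ℓ ∧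
      ℓ ≠ v₀ ∧ ℓ ≠ v₁ ∧ s = Finsupp.single j 1 + Finsupp.single ℓ 1} ∪
  {s | ∃ j a b : Fin n, ((2 ≤ (j : ℕ) ∧ (j : ℕ) ≤ d) ∨ n - d ≤ (j : ℕ)) ∧ G.Adj a b ∧
      a ∉ closedNbhdSet G {v₀, j} ∧ b ∉ closedNbhdSet G {v₀, j} ∧
      s = Finsupp.single j 1 + (Finsupp.single a 1 + Finsupp.single b 1)} ∪
  {s | ∃ ℓ : Fin n, G.Adj v₁ ℓ ∧ ℓ ≠ v₀ ∧ s = Finsupp.single v₁ 1 + Finsupp.single ℓ 1} ∪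
  {s | ∃ a b : Fin n, G.Adj a b ∧ a ∉ closedNbhdSet G {v₀, v₁} ∧ b ∉ closedNbhdSet G {v₀, v₁} ∧
      s = Finsupp.single v₁ 1 + (Finsupp.single a 1 + Finsupp.single b 1)}

lemma mem_SRHS_S1 {n d : ℕ} {G : SimpleGraph (Fin n)} {v₀ v₁ : Fin n} {s : Fin n →₀ ℕ}
    (h : ∃ j ℓ : Fin n, ((2 ≤ (j : ℕ) ∧ (j : ℕ) ≤ d) ∨ n - d ≤ (j : ℕ)) ∧ G.Adj j ℓ ∧
      ℓ ≠ v₀ ∧ ℓ ≠ v₁ ∧ s = Finsupp.single j 1 + Finsupp.single ℓ 1) :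
    s ∈ SRHSset n d G v₀ v₁ := Or.inl (Or.inl (Or.inl h))

lemma mem_SRHS_S2 {n d : ℕ} {G : SimpleGraph (Fin n)} {v₀ v₁ : Fin n} {s : Fin n →₀ ℕ}
    (h : ∃ j a b : Fin n, ((2 ≤ (j : ℕ) ∧ (j : ℕ) ≤ d) ∨ n - d ≤ (j : ℕ)) ∧ G.Adj a b ∧
      a ∉ closedNbhdSet G {v₀, j} ∧ b ∉ closedNbhdSet G {v₀, j} ∧
      s = Finsupp.single j 1 + (Finsupp.single a 1 + Finsupp.single b 1)) :
    s ∈ SRHSset n d G v₀ v₁ := Or.inl (Or.inl (Or.inr h))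

lemma mem_SRHS_S3 {n d : ℕ} {G : SimpleGraph (Fin n)} {v₀ v₁ : Fin n} {s : Fin n →₀ ℕ}
    (h : ∃ ℓ : Fin n, G.Adj v₁ ℓ ∧ ℓ ≠ v₀ ∧ s = Finsupp.single v₁ 1 + Finsupp.single ℓ 1) :
    s ∈ SRHSset n d G v₀ v₁ := Or.inl (Or.inr h)

lemma mem_SRHS_S4 {n d : ℕ} {G : SimpleGraph (Fin n)} {v₀ v₁ : Fin n} {s : Fin n →₀ ℕ}
    (h : ∃ a b : Fin n, G.Adj a b ∧ a ∉ closedNbhdSet G {v₀, v₁} ∧ b ∉ closedNbhdSet G {v₀, v₁} ∧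
      s = Finsupp.single v₁ 1 + (Finsupp.single a 1 + Finsupp.single b 1)) :
    s ∈ SRHSset n d G v₀ v₁ := Or.inr h

lemma not_mem_closedNbhd {n : ℕ} {G : SimpleGraph (Fin n)} {u w a : Fin n}
    (h0 : a ≠ u) (h1 : a ≠ w) (h2 : ¬ G.Adj u a) (h3 : ¬ G.Adj w a) :
    a ∉ closedNbhdSet G {u, w} := by
  intro h
  simp only [closedNbhdSet, Set.mem_union, Set.mem_insert_iff, Set.mem_singleton_iff,
    Set.mem_setOf_eq] at h
  rcases h with (h | h) | ⟨v, hv, hadj⟩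
  · exact h0 h
  · exact h1 h
  · rcases hv with rfl | rfl
    · exact h2 hadj
    · exact h3 hadj

lemma mem_closedNbhd_left {n : ℕ} (G : SimpleGraph (Fin n)) (u w : Fin n) :
    u ∈ closedNbhdSet G {u, w} :=
  Set.mem_union_left _ (Set.mem_insert _ _)

lemma comb_core (n d : ℕ) (hd : 1 ≤ d) (hn : 2 * d + 2 ≤ n)
    (G : SimpleGraph (Fin n)) (v₀ v₁ : Fin n) (hv₀ : (v₀ : ℕ) = 0) (hv₁ : (v₁ : ℕ) = 1)
    (hadj0 : ∀ x : Fin n, G.Adj v₀ x ↔ (n - d ≤ (x : ℕ) ∨ (1 ≤ (x : ℕ) ∧ (x : ℕ) ≤ d)))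
    (m : Fin n →₀ ℕ) (a b j : Fin n) (hab : G.Adj a b) (ha0 : a ≠ v₀) (hb0 : b ≠ v₀)
    (hma : 1 ≤ m a) (hmb : 1 ≤ m b)
    (hjT : n - d ≤ (j : ℕ) ∨ (1 ≤ (j : ℕ) ∧ (j : ℕ) ≤ d)) (hmj : 1 ≤ m j) :
    ∃ s ∈ SRHSset n d G v₀ v₁, s ≤ m := by
  classical
  have habne : a ≠ b := hab.ne
  -- the case where one endpoint of the edge lies in T
  have key : ∀ c c' : Fin n, G.Adj c c' →
      (n - d ≤ (c : ℕ) ∨ (1 ≤ (c : ℕ) ∧ (c : ℕ) ≤ d)) → c' ≠ v₀ →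
      1 ≤ m c → 1 ≤ m c' → ∃ s ∈ SRHSset n d G v₀ v₁, s ≤ m := by
    intro c c' hcc' hcT hc'0 hmc hmc'
    by_cases hc1 : c = v₁
    · subst hc1
      exact ⟨_, mem_SRHS_S3 ⟨c', hcc', hc'0, rfl⟩, pair_le hcc'.ne hmc hmc'⟩
    · by_cases hc'1 : c' = v₁
      · subst hc'1
        have hc0 : c ≠ v₀ := by
          intro h
          rw [h, hv₀] at hcT
          omega
        exact ⟨_, mem_SRHS_S3 ⟨c, hcc'.symm, hc0, rfl⟩,
          pair_le (Ne.symm hc1) hmc' hmc⟩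
      · have hc1' : (c : ℕ) ≠ 1 := fun h => hc1 (Fin.ext (by rw [h, hv₁]))
        exact ⟨_, mem_SRHS_S1 ⟨c, c', by omega, hcc', hc'0, hc'1, rfl⟩,
          pair_le hcc'.ne hmc hmc'⟩
  by_cases haT : n - d ≤ (a : ℕ) ∨ (1 ≤ (a : ℕ) ∧ (a : ℕ) ≤ d)
  · exact key a b hab haT hb0 hma hmb
  by_cases hbT : n - d ≤ (b : ℕ) ∨ (1 ≤ (b : ℕ) ∧ (b : ℕ) ≤ d)
  · exact key b a hab.symm hbT ha0 hmb hma
  -- now neither a nor b is a neighbor of v₀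
  have hna : ¬ G.Adj v₀ a := fun h => haT ((hadj0 a).mp h)
  have hnb : ¬ G.Adj v₀ b := fun h => hbT ((hadj0 b).mp h)
  have hja : j ≠ a := fun h => haT (h ▸ hjT)
  have hjb : j ≠ b := fun h => hbT (h ▸ hjT)
  by_cases hj1 : j = v₁
  · subst hj1
    by_cases hva : G.Adj j a
    · exact ⟨_, mem_SRHS_S3 ⟨a, hva, ha0, rfl⟩, pair_le hja hmj hma⟩
    by_cases hvb : G.Adj j b
    · exact ⟨_, mem_SRHS_S3 ⟨b, hvb, hb0, rfl⟩, pair_le hjb hmj hmb⟩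
    exact ⟨_, mem_SRHS_S4 ⟨a, b, hab,
        not_mem_closedNbhd ha0 (Ne.symm hja) hna hva,
        not_mem_closedNbhd hb0 (Ne.symm hjb) hnb hvb, rfl⟩,
      triple_le hja hjb habne hmj hma hmb⟩
  · have hj1' : (j : ℕ) ≠ 1 := fun h => hj1 (Fin.ext (by rw [h, hv₁]))
    have hj0 : j ≠ v₀ := by
      intro h
      rw [h, hv₀] at hjT
      omega
    have hrange : (2 ≤ (j : ℕ) ∧ (j : ℕ) ≤ d) ∨ n - d ≤ (j : ℕ) := by omega
    by_cases hJa : G.Adj j a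
    · by_cases ha1 : a = v₁
      · subst ha1
        exact ⟨_, mem_SRHS_S3 ⟨j, hJa.symm, hj0, rfl⟩, pair_le (Ne.symm hj1) hma hmj⟩
      · exact ⟨_, mem_SRHS_S1 ⟨j, a, hrange, hJa, ha0, ha1, rfl⟩, pair_le hja hmj hma⟩
    · by_cases hJb : G.Adj j b
      · by_cases hb1 : b = v₁
        · subst hb1
          exact ⟨_, mem_SRHS_S3 ⟨j, hJb.symm, hj0, rfl⟩, pair_le (Ne.symm hj1) hmb hmj⟩
        · exact ⟨_, mem_SRHS_S1 ⟨j, b, hrange, hJb, hb0, hb1, rfl⟩, pair_le hjb hmj hmb⟩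
      · exact ⟨_, mem_SRHS_S2 ⟨j, a, b, hrange, hab,
            not_mem_closedNbhd ha0 (Ne.symm hja) hna hJa,
            not_mem_closedNbhd hb0 (Ne.symm hjb) hnb hJb, rfl⟩,
          triple_le hja hjb habne hmj hma hmb⟩

end CombCore

/-- for `G = C_n^d` with `n ≥ 2d+2`, writing (in one-based labels)
`I = I(G)`, `J = I(G \ {1})`, `K = (x_{n-d+1},…,x_n,x_2,…,x_{d+1})`,
`A_j = (x_ℓ : ℓ ∈ N_G(j) \ {1,2})` for `j ≠ 1,2`, `A_2 = (x_ℓ : ℓ ∈ N_G(2) \ {1})`,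
`B_j = I(G \ N_G[{1,j}])`, `L = Σ_{j=3}^{d+1} x_j(A_j+B_j) + Σ_{j=n-d+1}^n x_j(A_j+B_j)`
and `M = A_2 + B_2`, one has `I = J + x_1 K` and `J ∩ K = L + x_2 M`.
(Vertices are zero-indexed by `Fin n`, so the one-based vertex `j` is `j - 1`.) -/
theorem edgeIdeal_power_cycle_splitting (𝕜 : Type) [Field 𝕜] (n d : ℕ)
    (hd : 1 ≤ d) (hn : 2 * d + 2 ≤ n)
    (G : SimpleGraph (Fin n)) (hG : G = (SimpleGraph.cycleGraph n).power d)
    (v₀ v₁ : Fin n) (hv₀ : (v₀ : ℕ) = 0) (hv₁ : (v₁ : ℕ) = 1)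
    (I J K L M : Ideal (MvPolynomial (Fin n) 𝕜))
    (hI : I = edgeIdeal 𝕜 G)
    (hJ : J = inducedEdgeIdeal 𝕜 G {v | v ≠ v₀})
    (hK : K = Ideal.span (X '' {j : Fin n | n - d ≤ (j : ℕ) ∨ (1 ≤ (j : ℕ) ∧ (j : ℕ) ≤ d)}))
    (hL : L =
      (∑ j ∈ Finset.univ.filter (fun j : Fin n => 2 ≤ (j : ℕ) ∧ (j : ℕ) ≤ d),
        Ideal.span {X j} * (nbrIdeal 𝕜 G j {v₀, v₁} + outsideNbhdEdgeIdeal 𝕜 G {v₀, j}))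
      + (∑ j ∈ Finset.univ.filter (fun j : Fin n => n - d ≤ (j : ℕ)),
        Ideal.span {X j} * (nbrIdeal 𝕜 G j {v₀, v₁} + outsideNbhdEdgeIdeal 𝕜 G {v₀, j})))
    (hM : M = nbrIdeal 𝕜 G v₁ {v₀} + outsideNbhdEdgeIdeal 𝕜 G {v₀, v₁}) :
    I = J + Ideal.span {X v₀} * K ∧ J ⊓ K = L + Ideal.span {X v₁} * M := by
  classical
  subst hI hJ hK hL hM
  have hadj0 : ∀ x : Fin n, G.Adj v₀ x ↔
      (n - d ≤ (x : ℕ) ∨ (1 ≤ (x : ℕ) ∧ (x : ℕ) ≤ d)) := by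
    intro x
    rw [hG]
    exact power_cycle_adj_v0 n d hd hn v₀ hv₀ x
  constructor
  · -- Part 1 : I = J + x₀ K
    apply le_antisymm
    · simp only [edgeIdeal, inducedEdgeIdeal]
      rw [Ideal.span_le]
      rintro mm ⟨a, b, hab, -, -, rfl⟩
      by_cases ha : a = v₀
      · rw [ha]
        exact mem_add_right' (Ideal.mul_mem_mul (Ideal.subset_span rfl)
          (Ideal.subset_span ⟨b, (hadj0 b).mp (ha ▸ hab), rfl⟩))
      · by_cases hb : b = v₀
        · have e : (X a * X b : MvPolynomial (Fin n) 𝕜) = X v₀ * X a := by rw [hb]; ring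
          rw [e]
          exact mem_add_right' (Ideal.mul_mem_mul (Ideal.subset_span rfl)
            (Ideal.subset_span ⟨a, (hadj0 a).mp (hb ▸ hab).symm, rfl⟩))
        · exact mem_add_left' (Ideal.subset_span ⟨a, b, hab, ha, hb, rfl⟩)
    · rw [Ideal.add_eq_sup]
      apply sup_le
      · simp only [edgeIdeal, inducedEdgeIdeal]
        rw [Ideal.span_le]
        rintro mm ⟨a, b, hab, -, -, rfl⟩
        exact Ideal.subset_span ⟨a, b, hab, Set.mem_univ a, Set.mem_univ b, rfl⟩
      · simp only [edgeIdeal, inducedEdgeIdeal]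
        rw [span_singleton_mul_span', Ideal.span_le]
        rintro mm ⟨g, ⟨x, hxT, rfl⟩, rfl⟩
        exact Ideal.subset_span ⟨v₀, x, (hadj0 x).mpr hxT, Set.mem_univ v₀, Set.mem_univ x, rfl⟩
  · -- Part 2 : J ⊓ K = L + x₁ M
    apply le_antisymm
    · -- hard direction
      intro p hp
      obtain ⟨hpJ, hpK⟩ := hp
      have hJset : {mm : MvPolynomial (Fin n) 𝕜 | ∃ a b : Fin n, G.Adj a b ∧
            a ∈ {v : Fin n | v ≠ v₀} ∧ b ∈ {v : Fin n | v ≠ v₀} ∧ mm = X a * X b}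
          = (fun s => monomial s (1 : 𝕜)) ''
            {s | ∃ a b : Fin n, G.Adj a b ∧ a ≠ v₀ ∧ b ≠ v₀ ∧
              s = Finsupp.single a 1 + Finsupp.single b 1} := by
        ext mm
        constructor
        · rintro ⟨a, b, hab, ha, hb, rfl⟩
          exact ⟨_, ⟨a, b, hab, ha, hb, rfl⟩, (X_mul_X_eq a b).symm⟩
        · rintro ⟨s, ⟨a, b, hab, ha, hb, rfl⟩, rfl⟩
          exact ⟨a, b, hab, ha, hb, (X_mul_X_eq a b).symm⟩
      rw [SetLike.mem_coe] at hpJ hpK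
      rw [inducedEdgeIdeal, hJset, mem_ideal_span_monomial_image] at hpJ
      rw [mem_ideal_span_X_image] at hpK
      have hmem : p ∈ Ideal.span ((fun s => monomial s (1 : 𝕜)) '' SRHSset n d G v₀ v₁) := by
        rw [mem_ideal_span_monomial_image]
        intro mm hmm
        obtain ⟨s, ⟨a, b, hab, ha, hb, rfl⟩, hsle⟩ := hpJ mm hmm
        obtain ⟨j, hjT, hjne⟩ := hpK mm hmm
        have habne : a ≠ b := hab.ne
        have hma : 1 ≤ mm a := by
          have h := Finsupp.le_def.mp hsle a
          rwa [pair_apply_left habne] at h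
        have hmb : 1 ≤ mm b := by
          have h := Finsupp.le_def.mp hsle b
          rwa [pair_apply_right habne] at h
        exact comb_core n d hd hn G v₀ v₁ hv₀ hv₁ hadj0 mm a b j hab ha hb hma hmb hjT
          (Nat.one_le_iff_ne_zero.mpr hjne)
      refine Ideal.span_le.mpr ?_ hmem
      rintro mm ⟨s, hs, rfl⟩
      rcases hs with ((⟨j, ℓ, hrange, hadj, hl0, hl1, rfl⟩ |
          ⟨j, a, b, hrange, hab, hann, hbnn, rfl⟩) |
          ⟨ℓ, hadj, hl0, rfl⟩) | ⟨a, b, hab, hann, hbnn, rfl⟩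
      · beta_reduce
        rw [← X_mul_X_eq]
        refine mem_add_left' ?_
        have hjmem : X j * X ℓ ∈
            Ideal.span {X j} * (nbrIdeal 𝕜 G j {v₀, v₁} + outsideNbhdEdgeIdeal 𝕜 G {v₀, j}) :=
          Ideal.mul_mem_mul (Ideal.subset_span rfl)
            (mem_add_left' (Ideal.subset_span
              ⟨ℓ, ⟨hadj, by simp [Set.mem_insert_iff, hl0, hl1]⟩, rfl⟩))
        rcases hrange with h | h
        · exact mem_add_left' (le_ideal_sum'
            (Finset.mem_filter.mpr ⟨Finset.mem_univ j, h⟩) hjmem)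
        · exact mem_add_right' (le_ideal_sum'
            (Finset.mem_filter.mpr ⟨Finset.mem_univ j, h⟩) hjmem)
      · beta_reduce
        rw [← X_mul_X_mul_X_eq]
        refine mem_add_left' ?_
        have hjmem : X j * (X a * X b) ∈
            Ideal.span {X j} * (nbrIdeal 𝕜 G j {v₀, v₁} + outsideNbhdEdgeIdeal 𝕜 G {v₀, j}) :=
          Ideal.mul_mem_mul (Ideal.subset_span rfl)
            (mem_add_right' (Ideal.subset_span ⟨a, b, hab, hann, hbnn, rfl⟩))
        rcases hrange with h | h
        · exact mem_add_left' (le_ideal_sum'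
            (Finset.mem_filter.mpr ⟨Finset.mem_univ j, h⟩) hjmem)
        · exact mem_add_right' (le_ideal_sum'
            (Finset.mem_filter.mpr ⟨Finset.mem_univ j, h⟩) hjmem)
      · beta_reduce
        rw [← X_mul_X_eq]
        exact mem_add_right' (Ideal.mul_mem_mul (Ideal.subset_span rfl)
          (mem_add_left' (Ideal.subset_span
            ⟨ℓ, ⟨hadj, by simp [hl0]⟩, rfl⟩)))
      · beta_reduce
        rw [← X_mul_X_mul_X_eq]
        exact mem_add_right' (Ideal.mul_mem_mul (Ideal.subset_span rfl)
          (mem_add_right' (Ideal.subset_span ⟨a, b, hab, hann, hbnn, rfl⟩)))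
    · -- easy direction : L + x₁ M ≤ J ⊓ K
      have hterm : ∀ j : Fin n, j ≠ v₀ →
          ((2 ≤ (j : ℕ) ∧ (j : ℕ) ≤ d) ∨ n - d ≤ (j : ℕ)) →
          Ideal.span {X j} * (nbrIdeal 𝕜 G j {v₀, v₁} + outsideNbhdEdgeIdeal 𝕜 G {v₀, j}) ≤
            inducedEdgeIdeal 𝕜 G {v | v ≠ v₀} ⊓
            Ideal.span (X '' {j : Fin n | n - d ≤ (j : ℕ) ∨ (1 ≤ (j : ℕ) ∧ (j : ℕ) ≤ d)}) := by
        intro j hj0 hjr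
        apply le_inf
        · have hAB : nbrIdeal 𝕜 G j {v₀, v₁} + outsideNbhdEdgeIdeal 𝕜 G {v₀, j}
              = Ideal.span ((X '' (G.neighborSet j \ {v₀, v₁})) ∪
                {mm : MvPolynomial (Fin n) 𝕜 | ∃ a b : Fin n, G.Adj a b ∧
                  a ∈ (closedNbhdSet G {v₀, j})ᶜ ∧ b ∈ (closedNbhdSet G {v₀, j})ᶜ ∧
                  mm = X a * X b}) := by
            rw [nbrIdeal, outsideNbhdEdgeIdeal, inducedEdgeIdeal, Ideal.span_union,
              Ideal.add_eq_sup]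
          rw [hAB, span_singleton_mul_span', Ideal.span_le]
          rintro mm ⟨g, hg, rfl⟩
          rcases hg with ⟨ℓ, ⟨hadj, hlnot⟩, rfl⟩ | ⟨x, y, hxy, hx, hy, rfl⟩
          · refine Ideal.subset_span ⟨j, ℓ, hadj, hj0, ?_, rfl⟩
            intro h
            exact hlnot (by simp [h])
          · have hx0 : x ≠ v₀ := fun h => hx (h ▸ mem_closedNbhd_left G v₀ j)
            have hy0 : y ≠ v₀ := fun h => hy (h ▸ mem_closedNbhd_left G v₀ j)
            exact Ideal.mul_mem_left _ _ (Ideal.subset_span ⟨x, y, hxy, hx0, hy0, rfl⟩)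
        · refine le_trans Ideal.mul_le_left (Ideal.span_le.mpr ?_)
          rw [Set.singleton_subset_iff]
          exact Ideal.subset_span ⟨j, by simp only [Set.mem_setOf_eq]; omega, rfl⟩
      rw [Ideal.add_eq_sup]
      apply sup_le
      · rw [Ideal.add_eq_sup]
        apply sup_le <;>
          refine ideal_sum_le' fun j hj => ?_ <;>
          rw [Finset.mem_filter] at hj
        · refine hterm j ?_ (Or.inl hj.2)
          intro h
          rw [h, hv₀] at hj
          omega
        · refine hterm j ?_ (Or.inr hj.2)
          intro h
          rw [h, hv₀] at hj
          omega
      · apply le_inf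
        · have hAB : nbrIdeal 𝕜 G v₁ {v₀} + outsideNbhdEdgeIdeal 𝕜 G {v₀, v₁}
              = Ideal.span ((X '' (G.neighborSet v₁ \ {v₀})) ∪
                {mm : MvPolynomial (Fin n) 𝕜 | ∃ a b : Fin n, G.Adj a b ∧
                  a ∈ (closedNbhdSet G {v₀, v₁})ᶜ ∧ b ∈ (closedNbhdSet G {v₀, v₁})ᶜ ∧
                  mm = X a * X b}) := by
            rw [nbrIdeal, outsideNbhdEdgeIdeal, inducedEdgeIdeal, Ideal.span_union,
              Ideal.add_eq_sup]
          have hv10 : v₁ ≠ v₀ := by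
            intro h
            rw [h, hv₀] at hv₁
            omega
          rw [hAB, span_singleton_mul_span', Ideal.span_le]
          rintro mm ⟨g, hg, rfl⟩
          rcases hg with ⟨ℓ, ⟨hadj, hlnot⟩, rfl⟩ | ⟨x, y, hxy, hx, hy, rfl⟩
          · refine Ideal.subset_span ⟨v₁, ℓ, hadj, hv10, ?_, rfl⟩
            intro h
            exact hlnot (by simp [h])
          · have hx0 : x ≠ v₀ := fun h => hx (h ▸ mem_closedNbhd_left G v₀ v₁)
            have hy0 : y ≠ v₀ := fun h => hy (h ▸ mem_closedNbhd_left G v₀ v₁)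
            exact Ideal.mul_mem_left _ _ (Ideal.subset_span ⟨x, y, hxy, hx0, hy0, rfl⟩)
        · refine le_trans Ideal.mul_le_left (Ideal.span_le.mpr ?_)
          rw [Set.singleton_subset_iff]
          refine Ideal.subset_span ⟨v₁, ?_, rfl⟩
          rw [Set.mem_setOf_eq, hv₁]
          omega
end
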